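/- Suppose β ~ N(0, τ²) with τ > 0 and, conditionally on β, b ~ N(β, se²) with se > 0. Then for every real c, E(β ∣ b > c) = τ²·φ(c/√(se² + τ²)) / (√(se² + τ²)·(1 − Φ(c/√(se² + τ²)))), where φ and Φ are the standard normal density and cumulative distribution function. -/

import Mathlib

open MeasureTheory ProbabilityTheory

/-- The standard normal density φ. -/
noncomputable def phiPDF (x : ℝ) : ℝ := (Real.sqrt (2 * Real.pi))⁻¹ * Real.exp (-x ^ 2 / 2)

/-- The standard normal cumulative distribution function Φ. -/
noncomputable def Phi (x : ℝ) : ℝ := ∫ t in Set.Iic x, phiPDF t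

open Real Set
open scoped NNReal ENNReal

noncomputable def G (v : ℝ) : ℝ → ℝ := gaussianPDFReal 0 v.toNNReal

lemma G_def {v : ℝ} (hv : 0 ≤ v) (x : ℝ) :
    G v x = (Real.sqrt (2 * Real.pi * v))⁻¹ * Real.exp (-x ^ 2 / (2 * v)) := by
  simp [G, gaussianPDFReal, Real.coe_toNNReal v hv]

lemma G_nonneg (v : ℝ) (x : ℝ) : 0 ≤ G v x := gaussianPDFReal_nonneg _ _ _

lemma G_integrable (v : ℝ) : Integrable (G v) := integrable_gaussianPDFReal _ _

lemma G_measurable (v : ℝ) : Measurable (G v) := measurable_gaussianPDFReal _ _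

lemma G_integral_one {v : ℝ} (hv : 0 < v) : ∫ x, G v x = 1 :=
  integral_gaussianPDFReal_eq_one 0 (by simp [Real.toNNReal_eq_zero]; linarith)

lemma integral_exp_shift {a : ℝ} (ha : 0 < a) (m : ℝ) :
    ∫ x, Real.exp (-(a * (x - m) ^ 2)) = Real.sqrt (π / a) := by
  have h : (fun x : ℝ => Real.exp (-(a * (x - m) ^ 2)))
      = fun x => (fun y : ℝ => Real.exp (-a * y ^ 2)) (x - m) := by
    funext x; ring_nf
  rw [h, integral_sub_right_eq_self (fun y : ℝ => Real.exp (-a * y ^ 2)) m]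
  exact integral_gaussian a

lemma integral_id_mul_exp {a : ℝ} (ha : 0 < a) :
    ∫ x, x * Real.exp (-(a * x ^ 2)) = 0 := by
  have h := MeasureTheory.integral_neg_eq_self (fun x : ℝ => x * Real.exp (-(a * x ^ 2))) volume
  simp only [neg_sq, neg_mul] at h
  rw [integral_neg] at h
  linarith [h]

lemma integral_id_mul_exp_shift {a : ℝ} (ha : 0 < a) (m : ℝ) :
    ∫ x, x * Real.exp (-(a * (x - m) ^ 2)) = m * Real.sqrt (π / a) := by
  have h : (fun x : ℝ => x * Real.exp (-(a * (x - m) ^ 2)))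
      = fun x => (fun y : ℝ => (y + m) * Real.exp (-(a * y ^ 2))) (x - m) := by
    funext x; simp only; ring_nf
  rw [h, integral_sub_right_eq_self (fun y : ℝ => (y + m) * Real.exp (-(a * y ^ 2))) m]
  have h1 : Integrable (fun y : ℝ => y * Real.exp (-(a * y ^ 2))) := by
    have := integrable_mul_exp_neg_mul_sq ha
    simpa [neg_mul] using this
  have h2 : Integrable (fun y : ℝ => m * Real.exp (-(a * y ^ 2))) := by
    have := (integrable_exp_neg_mul_sq ha).const_mul m
    simpa [neg_mul] using this
  have : (fun y : ℝ => (y + m) * Real.exp (-(a * y ^ 2)))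
      = fun y => y * Real.exp (-(a * y ^ 2)) + m * Real.exp (-(a * y ^ 2)) := by
    funext y; ring
  rw [this, integral_add h1 h2, integral_id_mul_exp ha, integral_const_mul]
  have h3 : (fun y : ℝ => Real.exp (-(a * y ^ 2))) = fun y => Real.exp (-(a * (y - 0) ^ 2)) := by
    funext y; ring_nf
  rw [h3, integral_exp_shift ha 0]
  ring

section Conv
variable {v1 v2 : ℝ} (h1 : 0 < v1) (h2 : 0 < v2)

include h1 h2 in
lemma conv_key (u : ℝ) : ∀ x : ℝ,
    G v1 x * G v2 (u - x)
      = (G (v1 + v2) u * (Real.sqrt (π / ((v1 + v2) / (2 * v1 * v2))))⁻¹)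
          * Real.exp (-(((v1 + v2) / (2 * v1 * v2)) * (x - v1 * u / (v1 + v2)) ^ 2)) := by
  intro x
  have hS : 0 < v1 + v2 := by linarith
  have ha : 0 < (v1 + v2) / (2 * v1 * v2) := by positivity
  rw [G_def h1.le, G_def h2.le, G_def hS.le]
  have hexp : Real.exp (-x ^ 2 / (2 * v1)) * Real.exp (-(u - x) ^ 2 / (2 * v2))
      = Real.exp (-u ^ 2 / (2 * (v1 + v2)))
        * Real.exp (-(((v1 + v2) / (2 * v1 * v2)) * (x - v1 * u / (v1 + v2)) ^ 2)) := by
    rw [← Real.exp_add, ← Real.exp_add]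
    congr 1
    have h1' := h1.ne'
    have h2' := h2.ne'
    have hS' := hS.ne'
    field_simp
    ring
  have hconst : (Real.sqrt (2 * π * v1))⁻¹ * (Real.sqrt (2 * π * v2))⁻¹
      = (Real.sqrt (2 * π * (v1 + v2)))⁻¹
        * (Real.sqrt (π / ((v1 + v2) / (2 * v1 * v2))))⁻¹ := by
    rw [← mul_inv, ← mul_inv]
    congr 1
    rw [← Real.sqrt_mul (by positivity), ← Real.sqrt_mul (by positivity)]
    congr 1
    field_simp
  calc (Real.sqrt (2 * π * v1))⁻¹ * Real.exp (-x ^ 2 / (2 * v1))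
        * ((Real.sqrt (2 * π * v2))⁻¹ * Real.exp (-(u - x) ^ 2 / (2 * v2)))
      = ((Real.sqrt (2 * π * v1))⁻¹ * (Real.sqrt (2 * π * v2))⁻¹)
        * (Real.exp (-x ^ 2 / (2 * v1)) * Real.exp (-(u - x) ^ 2 / (2 * v2))) := by ring
    _ = _ := by rw [hexp, hconst]; ring

include h1 h2 in
lemma conv_zero (u : ℝ) : ∫ x, G v1 x * G v2 (u - x) = G (v1 + v2) u := by
  have hS : 0 < v1 + v2 := by linarith
  have ha : 0 < (v1 + v2) / (2 * v1 * v2) := by positivity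
  simp_rw [conv_key h1 h2 u]
  rw [integral_const_mul, integral_exp_shift ha]
  rw [mul_assoc, inv_mul_cancel₀ (by positivity : Real.sqrt (π / ((v1 + v2) / (2 * v1 * v2))) ≠ 0),
    mul_one]

include h1 h2 in
lemma conv_one (u : ℝ) :
    ∫ x, x * (G v1 x * G v2 (u - x)) = (v1 / (v1 + v2)) * u * G (v1 + v2) u := by
  have hS : 0 < v1 + v2 := by linarith
  have ha : 0 < (v1 + v2) / (2 * v1 * v2) := by positivity
  have hpt : ∀ x : ℝ, x * (G v1 x * G v2 (u - x))
      = (G (v1 + v2) u * (Real.sqrt (π / ((v1 + v2) / (2 * v1 * v2))))⁻¹)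
          * (x * Real.exp (-(((v1 + v2) / (2 * v1 * v2)) * (x - v1 * u / (v1 + v2)) ^ 2))) := by
    intro x
    rw [conv_key h1 h2 u x]
    ring
  simp_rw [hpt]
  rw [integral_const_mul, integral_id_mul_exp_shift ha]
  have hne : Real.sqrt (π / ((v1 + v2) / (2 * v1 * v2))) ≠ 0 := by positivity
  field_simp

end Conv

lemma G_eq_phi {S : ℝ} (hS : 0 < S) (u : ℝ) :
    G S u = (Real.sqrt S)⁻¹ * phiPDF (u / Real.sqrt S) := by
  have hs : 0 < Real.sqrt S := Real.sqrt_pos.mpr hS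
  rw [G_def hS.le, phiPDF]
  rw [show (2 : ℝ) * π * S = (2 * π) * S by ring, Real.sqrt_mul (by positivity)]
  have h2 : (u / Real.sqrt S) ^ 2 = u ^ 2 / S := by
    rw [div_pow, Real.sq_sqrt hS.le]
  rw [h2, mul_inv]
  rw [neg_div, neg_div, div_div]
  ring

lemma integrable_id_mul_G {S : ℝ} (hS : 0 < S) :
    Integrable (fun u : ℝ => u * G S u) := by
  have hb : 0 < 1 / (2 * S) := by positivity
  have h := (integrable_mul_exp_neg_mul_sq hb).const_mul (Real.sqrt (2 * π * S))⁻¹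
  refine h.congr ?_
  filter_upwards with u
  rw [G_def hS.le]
  have : -(1 / (2 * S)) * u ^ 2 = -u ^ 2 / (2 * S) := by ring
  rw [this]
  ring

lemma tail_moment {S : ℝ} (hS : 0 < S) (c : ℝ) :
    ∫ u in Ioi c, u * G S u = S * G S c := by
  have hderiv : ∀ u ∈ Ici c, HasDerivAt (fun y : ℝ => -S * G S y) (u * G S u) u := by
    intro u _
    have h1 : HasDerivAt (fun y : ℝ => -y ^ 2 / (2 * S)) (-(2 * u) / (2 * S)) u := by
      simpa using ((hasDerivAt_pow 2 u).neg.div_const (2 * S))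
    have h2 := (h1.exp.const_mul ((Real.sqrt (2 * π * S))⁻¹)).const_mul (-S)
    have hfun : (fun y : ℝ => -S * ((Real.sqrt (2 * π * S))⁻¹ * Real.exp (-y ^ 2 / (2 * S))))
        = fun y : ℝ => -S * G S y := by
      funext y; rw [G_def hS.le]
    rw [hfun] at h2
    refine h2.congr_deriv ?_
    rw [G_def hS.le]
    field_simp
  have hint : IntegrableOn (fun u : ℝ => u * G S u) (Ioi c) :=
    (integrable_id_mul_G hS).integrableOn
  have htend : Filter.Tendsto (fun y : ℝ => -S * G S y) Filter.atTop (nhds 0) := by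
    have h0 : Filter.Tendsto (fun y : ℝ => y ^ 2 / (2 * S)) Filter.atTop Filter.atTop :=
      (Filter.tendsto_pow_atTop two_ne_zero).atTop_div_const (by positivity)
    have h1 : Filter.Tendsto (fun y : ℝ => -y ^ 2 / (2 * S)) Filter.atTop Filter.atBot := by
      simp_rw [neg_div]
      exact Filter.tendsto_neg_atBot_iff.mpr h0
    have h2 : Filter.Tendsto (fun y : ℝ => Real.exp (-y ^ 2 / (2 * S))) Filter.atTop (nhds 0) :=
      Real.tendsto_exp_atBot.comp h1
    have h3 := (h2.const_mul ((Real.sqrt (2 * π * S))⁻¹)).const_mul (-S)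
    simp only [mul_zero] at h3
    refine h3.congr fun y => ?_
    rw [G_def hS.le]
  have := integral_Ioi_of_hasDerivAt_of_tendsto' hderiv hint htend
  rw [this]
  ring

lemma integral_comp_mul_left_Iic' (g : ℝ → ℝ) (a : ℝ) {b : ℝ} (hb : 0 < b) :
    (∫ x in Iic a, g (b * x)) = b⁻¹ • ∫ x in Iic (b * a), g x := by
  have hm : ∀ c : ℝ, MeasurableSet (Iic c) := fun c => measurableSet_Iic
  rw [← integral_indicator (hm a), ← integral_indicator (hm (b * a)),
    ← abs_of_pos (inv_pos.mpr hb), ← Measure.integral_comp_mul_left]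
  congr
  ext1 x
  rw [← Set.indicator_comp_right]
  have hiff : b * x ≤ b * a ↔ x ≤ a := by constructor <;> intro h <;> nlinarith
  simp only [Set.indicator_apply, Set.mem_preimage, Set.mem_Iic, Function.comp_apply, hiff]
  by_cases hx : x ≤ a <;> simp [hx, hiff, Set.indicator_apply]

lemma tail_prob {S : ℝ} (hS : 0 < S) (c : ℝ) :
    ∫ u in Ioi c, G S u = 1 - Phi (c / Real.sqrt S) := by
  have hs : 0 < Real.sqrt S := Real.sqrt_pos.mpr hS
  have hsplit : (∫ u in Iic c, G S u) + ∫ u in Ioi c, G S u = 1 := by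
    rw [intervalIntegral.integral_Iic_add_Ioi (G_integrable S).integrableOn (G_integrable S).integrableOn]
    exact G_integral_one hS
  have hIic : ∫ u in Iic c, G S u = Phi (c / Real.sqrt S) := by
    have hpt : ∀ u : ℝ, G S u = (Real.sqrt S)⁻¹ * phiPDF ((Real.sqrt S)⁻¹ * u) := by
      intro u
      rw [G_eq_phi hS u, div_eq_inv_mul]
    simp_rw [hpt]
    rw [integral_const_mul, integral_comp_mul_left_Iic' phiPDF c (inv_pos.mpr hs)]
    rw [inv_inv, smul_eq_mul, ← mul_assoc, inv_mul_cancel₀ hs.ne', one_mul, Phi,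
      inv_mul_eq_div]
  linarith

lemma setIntegral_Ioi_comp_sub (g : ℝ → ℝ) (t x : ℝ) :
    ∫ u in Ioi t, g (u - x) = ∫ y in Ioi (t - x), g y := by
  have A : MeasurableEmbedding (fun u : ℝ => u - x) :=
    (Homeomorph.subRight x).isClosedEmbedding.measurableEmbedding
  have B := A.setIntegral_map (μ := volume) g (Ioi (t - x))
  have hmap : Measure.map (fun u : ℝ => u - x) volume = volume := by
    simp_rw [sub_eq_add_neg]
    exact map_add_right_eq_self volume (-x)
  rw [hmap] at B
  have hpre : (fun u : ℝ => u - x) ⁻¹' Ioi (t - x) = Ioi t := by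
    ext u; simp [sub_lt_sub_iff_right]
  rw [B, hpre]

lemma measure_Ioi_toReal {v : ℝ} (hv : 0 < v) (t : ℝ) :
    ((gaussianReal 0 v.toNNReal) (Ioi t)).toReal = ∫ y in Ioi t, G v y := by
  have hv' : v.toNNReal ≠ 0 := by
    simp only [ne_eq, Real.toNNReal_eq_zero, not_le]; linarith
  rw [gaussianReal_apply_eq_integral 0 hv' (Ioi t)]
  exact ENNReal.toReal_ofReal (setIntegral_nonneg measurableSet_Ioi fun y _ => G_nonneg v y)

lemma prod_gaussian_setIntegral {v1 v2 : ℝ} (h1 : 0 < v1) (h2 : 0 < v2) (c : ℝ)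
    (W : ℝ → ℝ) (hWm : Measurable W)
    (hW : Integrable (fun x => W x * G v1 x)) :
    ∫ p in {p : ℝ × ℝ | c < p.1 + p.2}, W p.1
        ∂((gaussianReal 0 v1.toNNReal).prod (gaussianReal 0 v2.toNNReal))
      = ∫ u in Ioi c, ∫ x, W x * G v1 x * G v2 (u - x) := by
  set μ := gaussianReal 0 v1.toNNReal with hμ
  set ν := gaussianReal 0 v2.toNNReal with hν
  have h1' : v1.toNNReal ≠ 0 := by
    simp only [ne_eq, Real.toNNReal_eq_zero, not_le]; linarith
  have hGm : Measurable (fun x => (G v1 x).toNNReal) := (G_measurable v1).real_toNNReal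
  have hdμ : μ = volume.withDensity (fun x => ((G v1 x).toNNReal : ℝ≥0∞)) := by
    rw [hμ, gaussianReal_of_var_ne_zero 0 h1']
    rfl
  have hA : MeasurableSet {p : ℝ × ℝ | c < p.1 + p.2} :=
    measurableSet_lt measurable_const (measurable_fst.add measurable_snd)
  have hWμ : Integrable W μ := by
    rw [hdμ]
    refine (integrable_withDensity_iff_integrable_smul (g := W) hGm).mpr ?_
    have e : (fun x => (G v1 x).toNNReal • W x) = fun x => W x * G v1 x := by
      funext x
      rw [NNReal.smul_def, Real.coe_toNNReal _ (G_nonneg v1 x), smul_eq_mul, mul_comm]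
    rw [e]
    exact hW
  have hWfst : Integrable (fun p : ℝ × ℝ => W p.1) (μ.prod ν) := by
    have := hWμ.mul_prod (integrable_const (μ := ν) (1 : ℝ))
    simpa using this
  have hInd : Integrable ({p : ℝ × ℝ | c < p.1 + p.2}.indicator (fun p => W p.1)) (μ.prod ν) :=
    hWfst.indicator hA
  rw [← integral_indicator hA, integral_prod _ hInd]
  have hinner : ∀ x : ℝ,
      (∫ y, ({p : ℝ × ℝ | c < p.1 + p.2}.indicator (fun p => W p.1)) (x, y) ∂ν)
        = W x * ∫ u in Ioi c, G v2 (u - x) := by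
    intro x
    have e1 : (fun y => ({p : ℝ × ℝ | c < p.1 + p.2}.indicator (fun p => W p.1)) (x, y))
        = (Ioi (c - x)).indicator (fun _ => W x) := by
      funext y
      simp only [Set.indicator_apply, Set.mem_setOf_eq, Set.mem_Ioi, sub_lt_iff_lt_add']
    rw [e1, integral_indicator measurableSet_Ioi, setIntegral_const, hν, measureReal_def,
      measure_Ioi_toReal h2 (c - x), smul_eq_mul,
      ← setIntegral_Ioi_comp_sub (G v2) c x, mul_comm]
  simp_rw [hinner]
  rw [hdμ, integral_withDensity_eq_integral_smul hGm]
  have e2 : (fun x => (G v1 x).toNNReal • (W x * ∫ u in Ioi c, G v2 (u - x)))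
      = fun x => ∫ u in Ioi c, W x * G v1 x * G v2 (u - x) := by
    funext x
    rw [NNReal.smul_def, Real.coe_toNNReal _ (G_nonneg v1 x), smul_eq_mul]
    calc G v1 x * (W x * ∫ u in Ioi c, G v2 (u - x))
        = (W x * G v1 x) * ∫ u in Ioi c, G v2 (u - x) := by ring
      _ = ∫ u in Ioi c, W x * G v1 x * G v2 (u - x) := by
          rw [← integral_const_mul]
  rw [e2]
  have hemb : MeasurableEmbedding (fun z : ℝ × ℝ => (z.1, z.2 - z.1)) := by
    let e : ℝ × ℝ ≃ᵐ ℝ × ℝ :=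
      { toFun := fun z => (z.1, z.2 - z.1)
        invFun := fun z => (z.1, z.2 + z.1)
        left_inv := fun z => by simp
        right_inv := fun z => by simp
        measurable_toFun := measurable_fst.prodMk (measurable_snd.sub measurable_fst)
        measurable_invFun := measurable_fst.prodMk (measurable_snd.add measurable_fst) }
    exact e.measurableEmbedding
  have hmp : MeasurePreserving (fun z : ℝ × ℝ => (z.1, z.2 - z.1))
      ((volume : Measure ℝ).prod volume) ((volume : Measure ℝ).prod volume) :=
    measurePreserving_prod_sub volume volume
  have hK : Integrable (fun q : ℝ × ℝ => (W q.1 * G v1 q.1) * G v2 q.2)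
      ((volume : Measure ℝ).prod volume) := hW.mul_prod (G_integrable v2)
  have hF : Integrable (fun z : ℝ × ℝ => W z.1 * G v1 z.1 * G v2 (z.2 - z.1))
      ((volume : Measure ℝ).prod volume) := by
    have := (hmp.integrable_comp_emb hemb).mpr hK
    exact this
  have hFr : Integrable (Function.uncurry fun x u => W x * G v1 x * G v2 (u - x))
      ((volume : Measure ℝ).prod (volume.restrict (Ioi c))) := by
    have hrw : (volume : Measure ℝ).prod (volume.restrict (Ioi c))
        = ((volume : Measure ℝ).prod volume).restrict (univ ×ˢ Ioi c) := by
      rw [← Measure.prod_restrict, Measure.restrict_univ]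
    rw [hrw]
    exact hF.restrict
  exact integral_integral_swap hFr

/-- Hierarchical normal model: `β ~ N(0, τ²)` and, given `β`, `b = β + ε ~ N(β, se²)`
with `ε ~ N(0, se²)` independent of `β`.  Then for every real `c`,
`E(β ∣ b > c) = τ²·φ(c/√(se² + τ²)) / (√(se² + τ²)·(1 − Φ(c/√(se² + τ²))))`,
where `E(X ∣ A) = E(X·1_A)/P(A)`. -/
theorem condExp_beta_given_b_gt {Ω : Type*} [MeasurableSpace Ω]
    (P : Measure Ω) [IsProbabilityMeasure P] (β ε b : Ω → ℝ) (τ se : ℝ)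
    (hτ : 0 < τ) (hse : 0 < se)
    (hβ : Measure.map β P = gaussianReal 0 (Real.toNNReal (τ ^ 2)))
    (hε : Measure.map ε P = gaussianReal 0 (Real.toNNReal (se ^ 2)))
    (hind : IndepFun β ε P)
    (hb : ∀ ω, b ω = β ω + ε ω) :
    ∀ c : ℝ,
      (∫ ω in {ω | c < b ω}, β ω ∂P) / (P {ω | c < b ω}).toReal
        = τ ^ 2 * phiPDF (c / Real.sqrt (se ^ 2 + τ ^ 2))
            / (Real.sqrt (se ^ 2 + τ ^ 2)
                * (1 - Phi (c / Real.sqrt (se ^ 2 + τ ^ 2)))) := by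
  intro c
  have hv1 : (0 : ℝ) < τ ^ 2 := by positivity
  have hv2 : (0 : ℝ) < se ^ 2 := by positivity
  have hS : (0 : ℝ) < τ ^ 2 + se ^ 2 := by positivity
  have hβm : AEMeasurable β P := aemeasurable_of_map_neZero (by rw [hβ]; infer_instance)
  have hεm : AEMeasurable ε P := aemeasurable_of_map_neZero (by rw [hε]; infer_instance)
  have hpm : AEMeasurable (fun ω => (β ω, ε ω)) P := hβm.prodMk hεm
  have hmap : Measure.map (fun ω => (β ω, ε ω)) P
      = (gaussianReal 0 (τ ^ 2).toNNReal).prod (gaussianReal 0 (se ^ 2).toNNReal) := by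
    rw [← hβ, ← hε]
    exact (indepFun_iff_map_prod_eq_prod_map_map hβm hεm).mp hind
  have hA : MeasurableSet {p : ℝ × ℝ | c < p.1 + p.2} :=
    measurableSet_lt measurable_const (measurable_fst.add measurable_snd)
  have hset : {ω | c < b ω} = (fun ω => (β ω, ε ω)) ⁻¹' {p : ℝ × ℝ | c < p.1 + p.2} := by
    ext ω; simp [hb ω]
  have hden : (P {ω | c < b ω}).toReal = 1 - Phi (c / Real.sqrt (τ ^ 2 + se ^ 2)) := by
    rw [hset, ← Measure.map_apply_of_aemeasurable hpm hA, hmap]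
    have h1 : (((gaussianReal 0 (τ ^ 2).toNNReal).prod (gaussianReal 0 (se ^ 2).toNNReal))
          {p : ℝ × ℝ | c < p.1 + p.2}).toReal
        = ∫ p in {p : ℝ × ℝ | c < p.1 + p.2}, (fun _ : ℝ => (1 : ℝ)) p.1
            ∂((gaussianReal 0 (τ ^ 2).toNNReal).prod (gaussianReal 0 (se ^ 2).toNNReal)) := by
      rw [setIntegral_const, smul_eq_mul, mul_one, measureReal_def]
    rw [h1, prod_gaussian_setIntegral hv1 hv2 c _ measurable_const
      (by simpa using G_integrable (τ ^ 2))]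
    have h2 : ∀ u : ℝ, (∫ x, (fun _ : ℝ => (1 : ℝ)) x * G (τ ^ 2) x * G (se ^ 2) (u - x))
        = G (τ ^ 2 + se ^ 2) u := by
      intro u
      simp_rw [one_mul]
      exact conv_zero hv1 hv2 u
    simp_rw [h2]
    exact tail_prob hS c
  have hnum : (∫ ω in {ω | c < b ω}, β ω ∂P) = τ ^ 2 * G (τ ^ 2 + se ^ 2) c := by
    rw [hset]
    have h0 : (∫ ω in (fun ω => (β ω, ε ω)) ⁻¹' {p : ℝ × ℝ | c < p.1 + p.2}, β ω ∂P)
        = ∫ p in {p : ℝ × ℝ | c < p.1 + p.2}, p.1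
            ∂(Measure.map (fun ω => (β ω, ε ω)) P) := by
      rw [setIntegral_map hA measurable_fst.aestronglyMeasurable hpm]
    rw [h0, hmap]
    have h1 : (∫ p in {p : ℝ × ℝ | c < p.1 + p.2}, p.1
          ∂((gaussianReal 0 (τ ^ 2).toNNReal).prod (gaussianReal 0 (se ^ 2).toNNReal)))
        = ∫ p in {p : ℝ × ℝ | c < p.1 + p.2}, id p.1
            ∂((gaussianReal 0 (τ ^ 2).toNNReal).prod (gaussianReal 0 (se ^ 2).toNNReal)) := rfl
    rw [h1, prod_gaussian_setIntegral hv1 hv2 c id measurable_id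
      (by simpa [id] using integrable_id_mul_G hv1)]
    have h2 : ∀ u : ℝ, (∫ x, id x * G (τ ^ 2) x * G (se ^ 2) (u - x))
        = (τ ^ 2 / (τ ^ 2 + se ^ 2)) * (u * G (τ ^ 2 + se ^ 2) u) := by
      intro u
      simp_rw [id, mul_assoc]
      rw [conv_one hv1 hv2 u]
      ring
    simp_rw [h2]
    rw [integral_const_mul, tail_moment hS c]
    field_simp
  rw [hnum, hden, G_eq_phi hS c]
  have hcomm : se ^ 2 + τ ^ 2 = τ ^ 2 + se ^ 2 := by ring
  rw [hcomm, ← div_div]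
  congr 1
  ring
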